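/- Let C: λ(x₁² + x₂² − x₀²) + (x₁−x₀)(x₁+x₀) = 0 be a hyperbolic circle with real points of tangency with the absolute conic N: x₁² + x₂² = x₀², where λ ∈ ℝ \ {0,1}. Then the Frégier locus of C is contained in the conic λ³(x₁² + x₂² − x₀²) + (5λ² + 8λ + 4)(x₁² − x₀²) = 0. -/

import Mathlib

/-- Points of the real projective plane, given by homogeneous coordinates `[x₀, x₁, x₂]`. -/
abbrev PP := Fin 3 → ℝ

/-- Cross product: line joining two points / point of intersection of two lines. -/
def cross3 (a b : PP) : PP :=
  ![a 1 * b 2 - a 2 * b 1, a 2 * b 0 - a 0 * b 2, a 0 * b 1 - a 1 * b 0]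

def dot3 (a b : PP) : ℝ := a 0 * b 0 + a 1 * b 1 + a 2 * b 2

/-- `q`, `r`, `f` are collinear. -/
def Coll (q r f : PP) : Prop := dot3 (cross3 q r) f = 0

/-- Euclidean perpendicularity of the lines `pq` and `pr`
(standard inner product on directions in the affine chart `x₀ = 1`). -/
def EuclidPerp (p q r : PP) : Prop :=
  (q 1 * p 0 - p 1 * q 0) * (r 1 * p 0 - p 1 * r 0) +
    (q 2 * p 0 - p 2 * q 0) * (r 2 * p 0 - p 2 * r 0) = 0

/-- Hyperbolic perpendicularity of the lines `pq` and `pr`: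
conjugacy with respect to the absolute conic `N : x₁² + x₂² = x₀²`
(a line is perpendicular to another iff it contains its pole w.r.t. `N`). -/
def HypPerp (p q r : PP) : Prop :=
  -(cross3 p q 0 * cross3 p r 0) + cross3 p q 1 * cross3 p r 1 +
    cross3 p q 2 * cross3 p r 2 = 0

/-- Elliptic perpendicularity of the lines `pq` and `pr`:
conjugacy with respect to the absolute polarity `x₀² + x₁² + x₂²`. -/
def EllPerp (p q r : PP) : Prop :=
  dot3 (cross3 p q) (cross3 p r) = 0

/-- `f` lies on every chord `qr` of the conic `C` such that the legs `pq`, `pr`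
are perpendicular (a right triangle inscribed in `C` with right angle at `p`). -/
def IsFregier (OnC : PP → Prop) (Perp : PP → PP → PP → Prop) (p f : PP) : Prop :=
  ∀ q r : PP, OnC q → OnC r → cross3 p q ≠ 0 → cross3 p r ≠ 0 → Perp p q r →
    Coll q r f

/-- `f` is THE Frégier point of the conic `C` at `p`: the common point of the
hypotenuses of all right triangles inscribed in `C` with right angle at `p`
(unique up to scalar). -/
def IsFregierPoint (OnC : PP → Prop) (Perp : PP → PP → PP → Prop) (p f : PP) : Prop :=
  f ≠ 0 ∧ IsFregier OnC Perp p f ∧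
    ∀ f' : PP, f' ≠ 0 → IsFregier OnC Perp p f' → ∃ t : ℝ, t ≠ 0 ∧ f' = t • f

/-- The Frégier locus of a conic: all Frégier points as `p` varies on the conic. -/
def FregierLocus (OnC : PP → Prop) (Perp : PP → PP → PP → Prop) : Set PP :=
  { f | ∃ p : PP, p ≠ 0 ∧ OnC p ∧ IsFregierPoint OnC Perp p f }

/-- Auxiliary: a vector with a nonzero component is nonzero. -/
lemma comp_ne_zero {v : PP} (i : Fin 3) (h : v i ≠ 0) : v ≠ 0 := by
  intro hv; exact h (by rw [hv]; rfl)

/-- Auxiliary: if both standard basis-like vectors are Frégier candidates,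
no Frégier point can exist. -/
lemma no_fregier_point {OnC : PP → Prop} {Perp : PP → PP → PP → Prop} {p f : PP}
    (hfp : IsFregierPoint OnC Perp p f)
    (h1 : IsFregier OnC Perp p ![1, 0, 0])
    (h2 : IsFregier OnC Perp p ![0, 1, 0]) : False := by
  obtain ⟨-, -, huniq⟩ := hfp
  obtain ⟨t1, ht1, e1⟩ := huniq ![1, 0, 0] (comp_ne_zero 0 (by norm_num)) h1
  obtain ⟨t2, ht2, e2⟩ := huniq ![0, 1, 0] (comp_ne_zero 1 (by norm_num)) h2
  have b1 : (0 : ℝ) = t1 * f 1 := by simpa using congrFun e1 1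
  have b2 : (1 : ℝ) = t2 * f 1 := by simpa using congrFun e2 1
  have hf1 : f 1 = 0 := by
    rcases mul_eq_zero.mp b1.symm with h | h
    · exact absurd h ht1
    · exact h
  rw [hf1, mul_zero] at b2
  norm_num at b2


/-- Auxiliary: on the degenerate tangency case the chord `pq` degenerates. -/
lemma degenerate_cross_zero (l e : ℝ) (p q : PP)
    (he : e ^ 2 = 1) (hp1 : p 1 = e * p 0) (hp2 : p 2 = 0)
    (hq : l * (q 1 ^ 2 + q 2 ^ 2 - q 0 ^ 2) + (q 1 - q 0) * (q 1 + q 0) = 0)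
    (hl0 : l ≠ 0) (hq10 : q 1 - e * q 0 = 0) : cross3 p q = 0 := by
  have h2 : l * q 2 ^ 2 = 0 := by
    linear_combination hq - (l + 1) * q 0 ^ 2 * he - (l + 1) * (q 1 + e * q 0) * hq10
  have hq2 : q 2 = 0 := by
    rcases mul_eq_zero.mp h2 with h | h
    · exact absurd h hl0
    · exact pow_eq_zero_iff two_ne_zero |>.mp h
  have c0 : cross3 p q 0 = 0 := by
    simp only [cross3, Matrix.cons_val_zero]
    rw [hq2, hp2]; ring
  have c1 : cross3 p q 1 = 0 := by
    simp only [cross3, Matrix.cons_val_one, Matrix.head_cons, Matrix.cons_val_zero]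
    rw [hq2, hp2]; ring
  have c2 : cross3 p q 2 = 0 := by
    simp only [cross3, Matrix.cons_val_two, Matrix.tail_cons, Matrix.head_cons]
    linear_combination p 0 * hq10 - q 0 * hp1
  funext i
  fin_cases i
  · exact c0
  · exact c1
  · exact c2

/-- For the hyperbolic circle
`C : λ(x₁² + x₂² − x₀²) + (x₁−x₀)(x₁+x₀) = 0` (`λ ∉ {0,1}`), the Frégier locus is
contained in the conic `λ³(x₁² + x₂² − x₀²) + (5λ² + 8λ + 4)(x₁² − x₀²) = 0`. -/
theorem fregier_locus_of_hyperbolic_circle_real_tangency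
    (l : ℝ) (hl0 : l ≠ 0) (hl1 : l ≠ 1) :
    ∀ f ∈ FregierLocus
        (fun v => l * (v 1 ^ 2 + v 2 ^ 2 - v 0 ^ 2) + (v 1 - v 0) * (v 1 + v 0) = 0)
        HypPerp,
      l ^ 3 * (f 1 ^ 2 + f 2 ^ 2 - f 0 ^ 2)
        + (5 * l ^ 2 + 8 * l + 4) * (f 1 ^ 2 - f 0 ^ 2) = 0 := by
  rintro f ⟨p, hp0, hpC, hfp⟩
  obtain ⟨hfne, hfreg, huniq⟩ := hfp
  -- hpC is already beta-reduced
  -- Case 1 : l = -1 (degenerate double-line conic): no Frégier point can exist.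
  by_cases hlm1 : l = -1
  · subst hlm1
    have hdeg : ∀ g : PP, IsFregier
        (fun v => (-1 : ℝ) * (v 1 ^ 2 + v 2 ^ 2 - v 0 ^ 2) + (v 1 - v 0) * (v 1 + v 0) = 0)
        HypPerp p g → True := fun _ _ => trivial
    refine absurd trivial (fun _ => no_fregier_point ⟨hfne, hfreg, huniq⟩ ?_ ?_) <;>
    · intro q r hq hr _ _ _
      -- hq hr beta-reduced
      have hq2 : q 2 = 0 := by
        have h2 : q 2 ^ 2 = 0 := by linear_combination -hq
        exact pow_eq_zero_iff two_ne_zero |>.mp h2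
      have hr2 : r 2 = 0 := by
        have h2 : r 2 ^ 2 = 0 := by linear_combination -hr
        exact pow_eq_zero_iff two_ne_zero |>.mp h2
      show dot3 (cross3 q r) _ = 0
      simp only [dot3, cross3, Matrix.cons_val_zero, Matrix.cons_val_one, Matrix.head_cons,
        Matrix.cons_val_two, Matrix.tail_cons]
      rw [hq2, hr2]; ring
  have hl1' : l + 1 ≠ 0 := fun h => hlm1 (by linarith)
  have hC2 : (l + 1) * (p 1 ^ 2 - p 0 ^ 2) + l * p 2 ^ 2 = 0 := by linear_combination hpC
  -- Case 2 : p 2 = 0, i.e. p is a tangency point: no Frégier point can exist.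
  by_cases hp2 : p 2 = 0
  · have hprod : (p 1 - p 0) * (p 1 + p 0) = 0 := by
      rcases mul_eq_zero.mp (show (l + 1) * ((p 1 - p 0) * (p 1 + p 0)) = 0 by
        linear_combination hC2 - l * p 2 * hp2) with h | h
      · exact absurd h hl1'
      · exact h
    obtain ⟨e, he, hp1⟩ : ∃ e : ℝ, e ^ 2 = 1 ∧ p 1 = e * p 0 := by
      rcases mul_eq_zero.mp hprod with h | h
      · exact ⟨1, by norm_num, by linarith⟩
      · exact ⟨-1, by norm_num, by linarith⟩
    have hp00 : p 0 ≠ 0 := by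
      intro h
      apply hp0
      have hp10 : p 1 = 0 := by rw [hp1, h, mul_zero]
      funext i
      fin_cases i
      · exact h
      · exact hp10
      · exact hp2
    have hvac : ∀ g : PP, IsFregier
        (fun v => l * (v 1 ^ 2 + v 2 ^ 2 - v 0 ^ 2) + (v 1 - v 0) * (v 1 + v 0) = 0)
        HypPerp p g := by
      intro g q r hq hr hcq hcr hperp
      exfalso
      -- hq hr beta-reduced
      simp only [HypPerp, cross3, Matrix.cons_val_zero, Matrix.cons_val_one, Matrix.head_cons,
        Matrix.cons_val_two, Matrix.tail_cons] at hperp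
      rw [hp1, hp2] at hperp
      have key : p 0 ^ 2 * ((q 1 - e * q 0) * (r 1 - e * r 0)) = 0 := by
        linear_combination hperp + p 0 ^ 2 * q 2 * r 2 * he
      rcases mul_eq_zero.mp key with h | h
      · exact hp00 (pow_eq_zero_iff two_ne_zero |>.mp h)
      rcases mul_eq_zero.mp h with h' | h'
      · exact hcq (degenerate_cross_zero l e p q he hp1 hp2 hq hl0 h')
      · exact hcr (degenerate_cross_zero l e p r he hp1 hp2 hr hl0 h')
    exact absurd trivial (fun _ => no_fregier_point ⟨hfne, hfreg, huniq⟩ (hvac _) (hvac _))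
  -- Main case : parametrize p on the conic.
  have hsum : p 0 + p 1 ≠ 0 := by
    intro h
    have h2 : l * p 2 ^ 2 = 0 := by linear_combination hC2 - (l + 1) * (p 1 - p 0) * h
    rcases mul_eq_zero.mp h2 with h' | h'
    · exact hl0 h'
    · exact hp2 (pow_eq_zero_iff two_ne_zero |>.mp h')
  obtain ⟨s, b, hs, hb, h0, h1, h2⟩ :
      ∃ s b : ℝ, s ≠ 0 ∧ b ≠ 0 ∧ p 0 = s * ((l + 1) * b ^ 2 + l) ∧
        p 1 = s * (l - (l + 1) * b ^ 2) ∧ p 2 = s * (-2 * (l + 1) * b) := by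
    refine ⟨(p 0 + p 1) / (2 * l), -(l * p 2) / ((l + 1) * (p 0 + p 1)),
      div_ne_zero hsum (mul_ne_zero two_ne_zero hl0),
      div_ne_zero (neg_ne_zero.mpr (mul_ne_zero hl0 hp2)) (mul_ne_zero hl1' hsum),
      ?_, ?_, ?_⟩
    · field_simp
      linear_combination -hC2
    · field_simp
      linear_combination hC2
    · field_simp
  -- First right-angle chord, through q₁ = [1,1,0].
  have hcall1 := hfreg ![1, 1, 0]
    ![((l+1)*(l+2))^2 + b^2*l*(l+1)^3, ((l+1)*(l+2))^2 - b^2*l*(l+1)^3, -2*b*(l+1)^3*(l+2)]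
    (by norm_num [Matrix.cons_val_two, Matrix.tail_cons, Matrix.head_cons])
    (by
      simp only [Matrix.cons_val_zero, Matrix.cons_val_one, Matrix.head_cons,
        Matrix.cons_val_two, Matrix.tail_cons]
      ring)
    (by
      apply comp_ne_zero 0
      simp only [cross3, Matrix.cons_val_zero, Matrix.cons_val_one, Matrix.head_cons,
        Matrix.cons_val_two, Matrix.tail_cons]
      intro hc; apply hp2; linarith)
    (by
      apply comp_ne_zero 2
      simp only [cross3, Matrix.cons_val_zero, Matrix.cons_val_one, Matrix.head_cons,
        Matrix.cons_val_two, Matrix.tail_cons]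
      intro hc
      rw [h0, h1] at hc
      have h8 : (8:ℝ) * b ^ 2 * (l + 1) ^ 4 * s = 0 := by linear_combination hc
      exact mul_ne_zero (mul_ne_zero (mul_ne_zero (by norm_num) (pow_ne_zero 2 hb))
        (pow_ne_zero 4 hl1')) hs h8)
    (by
      show HypPerp _ _ _
      simp only [HypPerp, cross3, Matrix.cons_val_zero, Matrix.cons_val_one, Matrix.head_cons,
        Matrix.cons_val_two, Matrix.tail_cons]
      rw [h0, h1, h2]
      ring)
  have E1 : -(l+2) * f 0 + (l+2) * f 1 - b * l * f 2 = 0 := by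
    simp only [Coll, dot3, cross3, Matrix.cons_val_zero, Matrix.cons_val_one, Matrix.head_cons,
      Matrix.cons_val_two, Matrix.tail_cons] at hcall1
    apply mul_left_cancel₀ (show (2*b*(l+1)^3 : ℝ) ≠ 0 from
      mul_ne_zero (mul_ne_zero two_ne_zero hb) (pow_ne_zero 3 hl1'))
    rw [mul_zero]
    linear_combination hcall1
  -- Second right-angle chord, through q₂ = [1,-1,0].
  have hcall2 := hfreg ![1, -1, 0]
    ![l^3 + b^2*(l+1)*(l+2)^2, l^3 - b^2*(l+1)*(l+2)^2, -2*b*l*(l+1)*(l+2)]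
    (by norm_num [Matrix.cons_val_two, Matrix.tail_cons, Matrix.head_cons])
    (by
      simp only [Matrix.cons_val_zero, Matrix.cons_val_one, Matrix.head_cons,
        Matrix.cons_val_two, Matrix.tail_cons]
      ring)
    (by
      apply comp_ne_zero 0
      simp only [cross3, Matrix.cons_val_zero, Matrix.cons_val_one, Matrix.head_cons,
        Matrix.cons_val_two, Matrix.tail_cons]
      intro hc; apply hp2; linarith)
    (by
      apply comp_ne_zero 2
      simp only [cross3, Matrix.cons_val_zero, Matrix.cons_val_one, Matrix.head_cons,
        Matrix.cons_val_two, Matrix.tail_cons]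
      intro hc
      rw [h0, h1] at hc
      have h8 : (-8:ℝ) * b ^ 2 * l * (l + 1) ^ 2 * s = 0 := by linear_combination hc
      exact mul_ne_zero (mul_ne_zero (mul_ne_zero (mul_ne_zero (by norm_num)
        (pow_ne_zero 2 hb)) hl0) (pow_ne_zero 2 hl1')) hs h8)
    (by
      show HypPerp _ _ _
      simp only [HypPerp, cross3, Matrix.cons_val_zero, Matrix.cons_val_one, Matrix.head_cons,
        Matrix.cons_val_two, Matrix.tail_cons]
      rw [h0, h1, h2]
      ring)
  have E2 : b*(l+1)*(l+2) * f 0 + b*(l+1)*(l+2) * f 1 + l^2 * f 2 = 0 := by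
    simp only [Coll, dot3, cross3, Matrix.cons_val_zero, Matrix.cons_val_one, Matrix.head_cons,
      Matrix.cons_val_two, Matrix.tail_cons] at hcall2
    apply mul_left_cancel₀ (show (2*l : ℝ) ≠ 0 from mul_ne_zero two_ne_zero hl0)
    rw [mul_zero]
    linear_combination hcall2
  -- Conclude.
  by_cases hl2 : l = -2
  · subst hl2
    have hf2 : f 2 = 0 := by
      apply mul_left_cancel₀ (show (2*b : ℝ) ≠ 0 from mul_ne_zero two_ne_zero hb)
      rw [mul_zero]
      linear_combination E1
    linear_combination (-8 * f 2) * hf2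
  · have hl2' : l + 2 ≠ 0 := fun h => hl2 (by linarith)
    have hG2 : (-2*b*(l+1)*(l+2)^2 : ℝ) ≠ 0 :=
      mul_ne_zero (mul_ne_zero (mul_ne_zero (by norm_num) hb) hl1') (pow_ne_zero 2 hl2')
    have hf0 : (-2*b*(l+1)*(l+2)^2) * f 0 = (l*(l + b^2*(l+1))*(l+2)) * f 2 := by
      linear_combination (b*(l+1)*(l+2)) * E1 + (-(l+2)) * E2
    have hf1 : (-2*b*(l+1)*(l+2)^2) * f 1 = (l*(l - b^2*(l+1))*(l+2)) * f 2 := by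
      linear_combination (-(b*(l+1)*(l+2))) * E1 + (-(l+2)) * E2
    have key : (-2*b*(l+1)*(l+2)^2)^2 *
        (l ^ 3 * (f 1 ^ 2 + f 2 ^ 2 - f 0 ^ 2)
          + (5 * l ^ 2 + 8 * l + 4) * (f 1 ^ 2 - f 0 ^ 2)) = 0 := by
      linear_combination
        ((l^3 + 5*l^2 + 8*l + 4) * ((-2*b*(l+1)*(l+2)^2) * f 1
          + (l*(l - b^2*(l+1))*(l+2)) * f 2)) * hf1
        - ((l^3 + 5*l^2 + 8*l + 4) * ((-2*b*(l+1)*(l+2)^2) * f 0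
          + (l*(l + b^2*(l+1))*(l+2)) * f 2)) * hf0
    rcases mul_eq_zero.mp key with h | h
    · exact absurd h (pow_ne_zero 2 hG2)
    · exact h
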